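/- Fix x ∈ ℝ^d and define, for w ∈ C_x and h ∈ ℝ^p, the Taylor remainder R(w, h, x) = φ(w + h, x) − φ(w, x) − (∇_w φ(w, x))ᵀ h. Let μ₀ ∈ P₂(ℝ^p) be absolutely continuous with respect to the Lebesgue measure, let α_j → ∞, and let T_j : ℝ^p → ℝ^p be measurable maps with {‖T_j‖_{L²(ℝ^p, μ₀)}} bounded, T_j(w)/α_j → 0 for μ₀-a.e. w, and ‖T_j(w)‖/α_j ≤ g(w) for μ₀-a.e. w for some g ∈ L²(ℝ^p, μ₀). Then ∫_{ℝ^p} R(α_j w, T_j(w)/α_j, x) dμ₀(w) → 0 as j → ∞. -/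

import Mathlib

open MeasureTheory
open scoped ENNReal NNReal RealInnerProductSpace

noncomputable section

variable {p d : ℕ}

abbrev E (p : ℕ) := EuclideanSpace ℝ (Fin p)

/-- `μ ∈ 𝒫₂(ℝ^p)`: probability measure with finite second moment. -/
def MemP2 (μ : Measure (E p)) : Prop :=
  IsProbabilityMeasure μ ∧ (∫⁻ w, (‖w‖₊ : ℝ≥0∞) ^ 2 ∂μ) < ⊤

/-- Squared 2-Wasserstein distance. -/
def W2sq (μ ν : Measure (E p)) : ℝ :=
  sInf { c | ∃ π : Measure (E p × E p),
      π.map Prod.fst = μ ∧ π.map Prod.snd = ν ∧ c = ∫ q, ‖q.1 - q.2‖ ^ 2 ∂π }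

/-- `μ` parameterizes the network `f`. -/
def Realizes (φ : E p → E d → ℝ) (μ : Measure (E p)) (f : E d → ℝ) : Prop :=
  ∀ x, f x = ∫ w, φ w x ∂μ

/-- `f ∈ Net_φ(ℝ^d)`. -/
def InNet (φ : E p → E d → ℝ) (f : E d → ℝ) : Prop :=
  ∃ μ : Measure (E p), MemP2 μ ∧ Realizes φ μ f

/-- Complexity measure `N(f, μ₀)`. -/
def Ncomp (φ : E p → E d → ℝ) (f : E d → ℝ) (μ₀ : Measure (E p)) : ℝ :=
  sInf { c | ∃ μ : Measure (E p), MemP2 μ ∧ Realizes φ μ f ∧ c = W2sq μ μ₀ }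

abbrev Sp (p : ℕ) := Metric.sphere (0 : E p) 1

lemma sphProj_mem (w : E p) (h : w ≠ 0) : ‖w‖⁻¹ • w ∈ Sp p := by
  have hw : ‖w‖ ≠ 0 := norm_ne_zero_iff.mpr h
  simp [mem_sphere_zero_iff_norm, norm_smul, abs_of_nonneg (norm_nonneg w),
    inv_mul_cancel₀ hw]

open scoped Classical in
/-- `ν = Π₂(μ)`: the 2-homogeneous projection of `μ` onto the sphere. -/
def IsProj2 (μ : Measure (E p)) (ν : Measure (Sp p)) : Prop :=
  ∀ ψ : C(Sp p, ℝ),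
    ∫ θ, ψ θ ∂ν =
      ∫ w, ‖w‖ ^ 2 * (if h : w = 0 then 0 else ψ ⟨‖w‖⁻¹ • w, sphProj_mem w h⟩) ∂μ

/-- Squared Hellinger–Kantorovich distance on `M⁺(S^{p-1})`. -/
def HKsq (ν₁ ν₂ : Measure (Sp p)) : ℝ :=
  sInf { c | ∃ μ₁ μ₂ : Measure (E p), MemP2 μ₁ ∧ MemP2 μ₂ ∧
      IsProj2 μ₁ ν₁ ∧ IsProj2 μ₂ ν₂ ∧ c = W2sq μ₁ μ₂ }

/-- Support of a measure on the sphere. -/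
def sphSupport (ν : Measure (Sp p)) : Set (Sp p) :=
  { θ | ∀ U : Set (Sp p), IsOpen U → θ ∈ U → 0 < ν U }

/-- Condition (C): `max_{θ₁} min_{θ₂ ∈ supp ν₀} d(θ₁, θ₂) < π/2` (geodesic distance). -/
def CondC (ν₀ : Measure (Sp p)) : Prop :=
  ∃ ε : ℝ, ε < Real.pi / 2 ∧
    ∀ θ₁ : Sp p, ∃ θ₂ ∈ sphSupport ν₀, Real.arccos ⟪(θ₁ : E p), (θ₂ : E p)⟫ ≤ ε

end


/-- A locally Lipschitz function is (quantitatively) Lipschitz on any compact set. -/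
lemma my_lipOnCompact {α : Type*} [MetricSpace α] {f : α → ℝ} (hf : LocallyLipschitz f)
    {K : Set α} (hK : IsCompact K) :
    ∃ L : ℝ, 0 ≤ L ∧ ∀ u ∈ K, ∀ v ∈ K, |f u - f v| ≤ L * dist u v := by
  classical
  -- local data
  have hloc : ∀ x : α, ∃ C : ℝ, ∃ r : ℝ, 0 ≤ C ∧ 0 < r ∧
      ∀ u ∈ Metric.ball x r, ∀ v ∈ Metric.ball x r, |f u - f v| ≤ C * dist u v := by
    intro x
    obtain ⟨C, t, ht, hlip⟩ := hf x
    obtain ⟨r, hr, hball⟩ := Metric.mem_nhds_iff.1 ht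
    refine ⟨C, r, C.coe_nonneg, hr, ?_⟩
    intro u hu v hv
    have := hlip.dist_le_mul u (hball hu) v (hball hv)
    simpa [Real.dist_eq] using this
  choose C r hC hr hball using hloc
  -- bound of f on K
  obtain ⟨S, hS⟩ := hK.exists_bound_of_continuousOn (hf.continuous.continuousOn (s := K))
  rcases K.eq_empty_or_nonempty with hKe | hKne
  · exact ⟨0, le_rfl, by simp [hKe]⟩
  have hS0 : 0 ≤ S := by
    obtain ⟨x0, hx0⟩ := hKne
    exact le_trans (norm_nonneg _) (hS x0 hx0)
  -- finite subcover by half-radius balls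
  obtain ⟨t, htK, hcov⟩ := hK.elim_nhds_subcover (fun x => Metric.ball x (r x / 2))
    (fun x _ => Metric.ball_mem_nhds x (half_pos (hr x)))
  have htne : t.Nonempty := by
    by_contra h
    rw [Finset.not_nonempty_iff_eq_empty] at h
    obtain ⟨x0, hx0⟩ := hKne
    have := hcov hx0
    simp [h] at this
  set δ : ℝ := t.inf' htne (fun x => r x / 2) with hδdef
  have hδpos : 0 < δ := by
    rw [hδdef]
    apply (Finset.lt_inf'_iff _).2
    intro b _
    exact half_pos (hr b)
  set Cmax : ℝ := t.sup' htne C with hCdef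
  refine ⟨max Cmax (2 * S / δ), le_trans (le_max_right _ _) (by gcongr; positivity), ?_⟩
  intro u hu v hv
  obtain ⟨x, hxt, hux⟩ := Set.mem_iUnion₂.1 (hcov hu)
  by_cases hcase : dist u v < r x / 2
  · -- both in ball x (r x)
    have hu' : u ∈ Metric.ball x (r x) :=
      Metric.ball_subset_ball (by linarith [hr x]) hux
    have hv' : v ∈ Metric.ball x (r x) := by
      rw [Metric.mem_ball] at hux ⊢
      calc dist v x ≤ dist v u + dist u x := dist_triangle _ _ _
        _ < r x / 2 + r x / 2 := by rw [dist_comm v u]; exact add_lt_add hcase hux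
        _ = r x := by ring
    calc |f u - f v| ≤ C x * dist u v := hball x u hu' v hv'
      _ ≤ max Cmax (2 * S / δ) * dist u v := by
          apply mul_le_mul_of_nonneg_right _ dist_nonneg
          exact le_trans (Finset.le_sup' C hxt) (le_max_left _ _)
  · -- far apart
    push_neg at hcase
    have hδle : δ ≤ dist u v := le_trans (Finset.inf'_le _ hxt) hcase
    have h2S : |f u - f v| ≤ 2 * S := by
      have h1 := hS u hu
      have h2 := hS v hv
      rw [Real.norm_eq_abs] at h1 h2
      have := abs_sub_abs_le_abs_sub (f u) (f v)
      calc |f u - f v| ≤ |f u| + |f v| := abs_sub _ _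
        _ ≤ 2 * S := by linarith
    calc |f u - f v| ≤ 2 * S := h2S
      _ = (2 * S / δ) * δ := by field_simp
      _ ≤ (2 * S / δ) * dist u v := by
          apply mul_le_mul_of_nonneg_left hδle (by positivity)
      _ ≤ max Cmax (2 * S / δ) * dist u v := by
          apply mul_le_mul_of_nonneg_right (le_max_right _ _) dist_nonneg


variable {Ev : Type*} [NormedAddCommGroup Ev] [NormedSpace ℝ Ev]

lemma my_quadLip [ProperSpace Ev] (f : Ev → ℝ)
    (hh : ∀ r : ℝ, 0 ≤ r → ∀ w, f (r • w) = r ^ 2 * f w)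
    (hlipc : ∃ L : ℝ, 0 ≤ L ∧ ∀ u ∈ Metric.closedBall (0:Ev) 1, ∀ v ∈ Metric.closedBall (0:Ev) 1,
      |f u - f v| ≤ L * dist u v) :
    ∃ L : ℝ, 0 ≤ L ∧ ∀ u v : Ev, |f u - f v| ≤ L * (‖u‖ + ‖v‖) * ‖u - v‖ := by
  obtain ⟨L, hL0, hLip⟩ := hlipc
  refine ⟨L, hL0, ?_⟩
  intro u v
  by_cases hs : ‖u‖ + ‖v‖ = 0
  · have hu : u = 0 := by
      have := norm_nonneg u; have := norm_nonneg v
      have : ‖u‖ = 0 := by linarith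
      exact norm_eq_zero.1 this
    have hv : v = 0 := by
      have := norm_nonneg u; have := norm_nonneg v
      have : ‖v‖ = 0 := by linarith
      exact norm_eq_zero.1 this
    simp [hu, hv]
  · set s : ℝ := ‖u‖ + ‖v‖ with hsdef
    have hspos : 0 < s := lt_of_le_of_ne (by positivity) (Ne.symm hs)
    have hmem : ∀ z : Ev, ‖z‖ ≤ s → s⁻¹ • z ∈ Metric.closedBall (0:Ev) 1 := by
      intro z hz
      rw [Metric.mem_closedBall, dist_zero_right, norm_smul, norm_inv, Real.norm_eq_abs,
        abs_of_pos hspos]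
      rw [inv_mul_le_iff₀ hspos]
      linarith
    have hu' := hmem u (by rw [hsdef]; linarith [norm_nonneg v])
    have hv' := hmem v (by rw [hsdef]; linarith [norm_nonneg u])
    have hval : ∀ z : Ev, f z = s ^ 2 * f (s⁻¹ • z) := by
      intro z
      have := hh s hspos.le (s⁻¹ • z)
      rw [smul_smul, mul_inv_cancel₀ hspos.ne', one_smul] at this
      linarith
    have hdist : dist (s⁻¹ • u) (s⁻¹ • v) = s⁻¹ * ‖u - v‖ := by
      rw [dist_eq_norm, ← smul_sub, norm_smul, norm_inv, Real.norm_eq_abs, abs_of_pos hspos]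
    calc |f u - f v| = |s ^ 2 * f (s⁻¹ • u) - s ^ 2 * f (s⁻¹ • v)| := by
          rw [← hval, ← hval]
      _ = s ^ 2 * |f (s⁻¹ • u) - f (s⁻¹ • v)| := by
          rw [← mul_sub, abs_mul, abs_of_pos (by positivity : (0:ℝ) < s ^ 2)]
      _ ≤ s ^ 2 * (L * (s⁻¹ * ‖u - v‖)) := by
          have := hLip _ hu' _ hv'
          rw [hdist] at this
          exact mul_le_mul_of_nonneg_left this (by positivity)
      _ = L * s * ‖u - v‖ := by field_simp
      _ = L * (‖u‖ + ‖v‖) * ‖u - v‖ := by rw [hsdef]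

lemma my_derivBound (f : Ev → ℝ) (L : ℝ) (hL : 0 ≤ L)
    (hf : ∀ u v : Ev, |f u - f v| ≤ L * (‖u‖ + ‖v‖) * ‖u - v‖) (w : Ev) :
    ‖fderiv ℝ f w‖ ≤ L * (2 * ‖w‖ + 2) := by
  apply norm_fderiv_le_of_lip' ℝ (by positivity)
  filter_upwards [Metric.ball_mem_nhds w one_pos] with u hu
  have h1 : ‖u‖ ≤ ‖w‖ + 1 := by
    have : dist u w < 1 := Metric.mem_ball.1 hu
    have h2 : ‖u - w‖ < 1 := by rwa [← dist_eq_norm]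
    calc ‖u‖ = ‖w + (u - w)‖ := by congr 1; abel
      _ ≤ ‖w‖ + ‖u - w‖ := norm_add_le _ _
      _ ≤ ‖w‖ + 1 := by linarith
  calc ‖f u - f w‖ = |f u - f w| := rfl
    _ ≤ L * (‖u‖ + ‖w‖) * ‖u - w‖ := hf u w
    _ ≤ L * (2 * ‖w‖ + 2) * ‖u - w‖ := by
        apply mul_le_mul_of_nonneg_right _ (norm_nonneg _)
        apply mul_le_mul_of_nonneg_left _ hL
        linarith

lemma my_derivHomog (f : Ev → ℝ)
    (hh : ∀ r : ℝ, 0 ≤ r → ∀ w, f (r • w) = r ^ 2 * f w) {w : Ev} {r : ℝ} (hr : 0 < r)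
    (hdw : DifferentiableAt ℝ f w) (hdrw : DifferentiableAt ℝ f (r • w)) :
    fderiv ℝ f (r • w) = r • fderiv ℝ f w := by
  have hsm : HasFDerivAt (fun u : Ev => r • u) (r • ContinuousLinearMap.id ℝ Ev) w := by
    have := (r • ContinuousLinearMap.id ℝ Ev).hasFDerivAt (x := w)
    convert this using 2
    simp
  have hcomp : HasFDerivAt (fun u => f (r • u))
      ((fderiv ℝ f (r • w)).comp (r • ContinuousLinearMap.id ℝ Ev)) w :=
    hdrw.hasFDerivAt.comp w hsm
  have hconst : HasFDerivAt (fun u => r ^ 2 * f u) ((r ^ 2) • fderiv ℝ f w) w :=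
    hdw.hasFDerivAt.const_mul (r ^ 2)
  have heq : (fun u => f (r • u)) = fun u => r ^ 2 * f u := funext fun u => hh r hr.le u
  rw [heq] at hcomp
  have huniq := hcomp.unique hconst
  ext v
  have h1 := congrArg (fun T : Ev →L[ℝ] ℝ => T v) huniq
  have h2 : fderiv ℝ f (r • w) (r • v) = r ^ 2 * fderiv ℝ f w v := by simpa using h1
  have h3 : fderiv ℝ f (r • w) (r • v) = r * fderiv ℝ f (r • w) v := by
    rw [(fderiv ℝ f (r • w)).map_smul]; simp
  have h4 : r * fderiv ℝ f (r • w) v = r * (r * fderiv ℝ f w v) := by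
    rw [← h3, h2]; ring
  have h5 := mul_left_cancel₀ hr.ne' h4
  simpa [smul_eq_mul] using h5

lemma my_taylorBound (f : Ev → ℝ) {Cx : Set Ev}
    (hdf : ∀ u ∈ Cx, DifferentiableAt ℝ f u)
    (hdf' : ∀ u ∈ Cx, DifferentiableAt ℝ (fderiv ℝ f) u)
    (M : ℝ) (hM0 : 0 ≤ M) (hM : ∀ u ∈ Cx, ‖fderiv ℝ (fderiv ℝ f) u‖ ≤ M) (w h : Ev)
    (hseg : ∀ t ∈ Set.Icc (0:ℝ) 1, w + t • h ∈ Cx) :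
    |f (w + h) - f w - fderiv ℝ f w h| ≤ M * ‖h‖ ^ 2 := by
  set s : Set Ev := segment ℝ w (w + h) with hsdef
  have hsmem : ∀ u ∈ s, ∃ t ∈ Set.Icc (0:ℝ) 1, u = w + t • h := by
    intro u hu
    rw [hsdef, segment_eq_image'] at hu
    obtain ⟨t, ht, rfl⟩ := hu
    exact ⟨t, ht, by rw [add_sub_cancel_left]⟩
  have hssub : s ⊆ Cx := by
    intro u hu
    obtain ⟨t, ht, rfl⟩ := hsmem u hu
    exact hseg t ht
  have hlipD : ∀ u ∈ s, ‖fderiv ℝ f u - fderiv ℝ f w‖ ≤ M * ‖h‖ := by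
    intro u hu
    have hws : w ∈ s := left_mem_segment ℝ w (w + h)
    have hest := (convex_segment w (w + h)).norm_image_sub_le_of_norm_fderiv_le
      (f := fderiv ℝ f) (fun v hv => hdf' v (hssub hv)) (fun v hv => hM v (hssub hv)) hws hu
    obtain ⟨t, ht, rfl⟩ := hsmem u hu
    calc ‖fderiv ℝ f (w + t • h) - fderiv ℝ f w‖ ≤ M * ‖w + t • h - w‖ := hest
      _ = M * (|t| * ‖h‖) := by rw [add_sub_cancel_left, norm_smul, Real.norm_eq_abs]
      _ ≤ M * (1 * ‖h‖) := by
          apply mul_le_mul_of_nonneg_left _ hM0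
          apply mul_le_mul_of_nonneg_right _ (norm_nonneg _)
          rw [abs_le]; exact ⟨by linarith [ht.1], ht.2⟩
      _ = M * ‖h‖ := by ring
  set G : Ev → ℝ := fun u => f u - fderiv ℝ f w u with hGdef
  have hGdiff : ∀ u ∈ s, DifferentiableAt ℝ G u := fun u hu =>
    (hdf u (hssub hu)).sub ((fderiv ℝ f w).differentiableAt)
  have hGder : ∀ u ∈ s, ‖fderiv ℝ G u‖ ≤ M * ‖h‖ := by
    intro u hu
    have heq : fderiv ℝ G u = fderiv ℝ f u - fderiv ℝ f w := by
      rw [hGdef]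
      rw [fderiv_fun_sub (hdf u (hssub hu)) ((fderiv ℝ f w).differentiableAt),
        (fderiv ℝ f w).fderiv]
    rw [heq]
    exact hlipD u hu
  have hfin := (convex_segment w (w + h)).norm_image_sub_le_of_norm_fderiv_le hGdiff hGder
    (left_mem_segment ℝ w (w + h)) (right_mem_segment ℝ w (w + h))
  have hGval : G (w + h) - G w = f (w + h) - f w - fderiv ℝ f w h := by
    have h3 : fderiv ℝ f w (w + h) - fderiv ℝ f w w = fderiv ℝ f w h := by
      rw [← (fderiv ℝ f w).map_sub, add_sub_cancel_left]
    show f (w + h) - fderiv ℝ f w (w + h) - (f w - fderiv ℝ f w w) = _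
    linarith
  rw [hGval] at hfin
  calc |f (w + h) - f w - fderiv ℝ f w h| ≤ M * ‖h‖ * ‖w + h - w‖ := hfin
    _ = M * ‖h‖ ^ 2 := by rw [add_sub_cancel_left]; ring

lemma my_sc2 (M a t : ℝ) (ha : 0 < a) :
    a ^ 2 * (M * ((a ^ 2)⁻¹ * t) ^ 2) = M * (a⁻¹ * t) ^ 2 := by
  field_simp

lemma my_sc3 (a t : ℝ) (ha : 0 < a) : a ^ 2 * ((a ^ 2)⁻¹ * t) = t := by
  field_simp

lemma my_amgm (δ a b : ℝ) (hδ : 0 < δ) : b * a ≤ δ / 2 * a ^ 2 + (2 * δ)⁻¹ * b ^ 2 := by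
  rw [← sub_nonneg]
  have hkey : δ / 2 * a ^ 2 + (2 * δ)⁻¹ * b ^ 2 - b * a = (2 * δ)⁻¹ * (δ * a - b) ^ 2 := by
    field_simp
    ring
  rw [hkey]
  positivity

set_option maxHeartbeats 1000000 in
theorem stmt18 (p d : ℕ) (hp : 0 < p) (hd : 0 < d) (φ : E p → E d → ℝ)
    (hhomog : ∀ r : ℝ, 0 ≤ r → ∀ w x, φ (r • w) x = r ^ 2 * φ w x)
    (hreg : ∀ x : E d, LocallyLipschitz (fun w => φ w x))
    (x : E d) (Cx : Set (E p)) (hopen : IsOpen Cx)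
    (hcone : ∀ r : ℝ, 0 < r → ∀ w ∈ Cx, r • w ∈ Cx)
    (hnull : volume Cxᶜ = 0)
    (hC2 : ContDiffOn ℝ 2 (fun w => φ w x) Cx)
    (hhess : ∃ M : ℝ, ∀ w ∈ Cx,
      ‖fderiv ℝ (fun v => fderiv ℝ (fun u => φ u x) v) w‖ ≤ M)
    (R : E p → E p → ℝ)
    (hR : ∀ w h : E p, R w h =
      φ (w + h) x - φ w x - ⟪gradient (fun u => φ u x) w, h⟫)
    (μ₀ : Measure (E p)) (hμ₀ : MemP2 μ₀) (hac : μ₀ ≪ volume)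
    (αj : ℕ → ℝ) (hαjpos : ∀ j, 0 < αj j)
    (hαj : Filter.Tendsto αj Filter.atTop Filter.atTop)
    (Tj : ℕ → E p → E p) (hTjmeas : ∀ j, Measurable (Tj j))
    (hTjbdd : ∃ B : ℝ, ∀ j, (∫ w, ‖Tj j w‖ ^ 2 ∂μ₀) ≤ B)
    (hTjae : ∀ᵐ w ∂μ₀,
      Filter.Tendsto (fun j => (αj j)⁻¹ • Tj j w) Filter.atTop (nhds 0))
    (g : E p → ℝ) (hg : MemLp g 2 μ₀)
    (hdom : ∀ j, ∀ᵐ w ∂μ₀, ‖Tj j w‖ / αj j ≤ g w) :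
    Filter.Tendsto (fun j => ∫ w, R (αj j • w) ((αj j)⁻¹ • Tj j w) ∂μ₀)
      Filter.atTop (nhds 0) := by
  classical
  open Filter in
  haveI : IsProbabilityMeasure μ₀ := hμ₀.1
  set f : E p → ℝ := fun w => φ w x with hfdef
  obtain ⟨M₀, hM₀⟩ := hhess
  set M : ℝ := max M₀ 0 with hMdef
  have hM0 : 0 ≤ M := le_max_right _ _
  have hMb : ∀ w ∈ Cx, ‖fderiv ℝ (fderiv ℝ f) w‖ ≤ M := fun w hw =>
    le_trans (hM₀ w hw) (le_max_left _ _)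
  have hhom : ∀ r : ℝ, 0 ≤ r → ∀ w, f (r • w) = r ^ 2 * f w := fun r hr w => hhomog r hr w x
  obtain ⟨L, hL0, hLipQ⟩ :=
    my_quadLip f hhom (my_lipOnCompact (hreg x) (isCompact_closedBall (0 : E p) 1))
  have hDb : ∀ w, ‖fderiv ℝ f w‖ ≤ L * (2 * ‖w‖ + 2) := my_derivBound f L hL0 hLipQ
  have hdf : ∀ u ∈ Cx, DifferentiableAt ℝ f u := fun u hu =>
    (hC2.contDiffAt (hopen.mem_nhds hu)).differentiableAt (by norm_num)
  have hdf' : ∀ u ∈ Cx, DifferentiableAt ℝ (fderiv ℝ f) u := fun u hu =>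
    ((hC2.contDiffAt (hopen.mem_nhds hu)).fderiv_right (m := 1) (by norm_num)).differentiableAt
      one_ne_zero
  have hgrad : ∀ v h : E p, ⟪gradient f v, h⟫ = fderiv ℝ f v h := fun v h =>
    InnerProductSpace.toDual_symm_apply
  -- the rescaled increment and the Taylor remainder of `f`
  set hn : ℕ → E p → E p := fun j w => ((αj j) ^ 2)⁻¹ • Tj j w with hhn
  set r0 : E p → E p → ℝ := fun w h => f (w + h) - f w - fderiv ℝ f w h with hr0
  -- Key homogeneity identity
  have key : ∀ j, ∀ w ∈ Cx,
      R (αj j • w) ((αj j)⁻¹ • Tj j w) = (αj j) ^ 2 * r0 w (hn j w) := by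
    intro j w hw
    have hα0 : 0 < αj j := hαjpos j
    rw [hR]
    show f (αj j • w + (αj j)⁻¹ • Tj j w) - f (αj j • w)
        - ⟪gradient f (αj j • w), (αj j)⁻¹ • Tj j w⟫ = _
    rw [hgrad]
    have e1 : αj j • w + (αj j)⁻¹ • Tj j w = αj j • (w + hn j w) := by
      rw [smul_add, smul_smul]
      congr 2
      field_simp
    have e4 : fderiv ℝ f (αj j • w) = αj j • fderiv ℝ f w :=
      my_derivHomog f hhom hα0 (hdf w hw) (hdf _ (hcone (αj j) hα0 w hw))
    rw [e1, hhom (αj j) hα0.le (w + hn j w), hhom (αj j) hα0.le w, e4]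
    have e5 : (αj j • fderiv ℝ f w) ((αj j)⁻¹ • Tj j w)
        = (αj j) ^ 2 * fderiv ℝ f w (hn j w) := by
      rw [ContinuousLinearMap.smul_apply, (fderiv ℝ f w).map_smul, (fderiv ℝ f w).map_smul]
      simp only [smul_eq_mul]
      field_simp
    rw [e5, hr0]
    ring
  -- measurability of the integrand
  have hfcont : Continuous f := (hreg x).continuous
  have hfd_meas : Measurable (fderiv ℝ f) := measurable_fderiv ℝ f
  have hgrad_meas : Measurable (gradient f) := by
    have : gradient f = fun w => (InnerProductSpace.toDual ℝ (E p)).symm (fderiv ℝ f w) := rfl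
    rw [this]
    exact (LinearIsometryEquiv.continuous _).measurable.comp hfd_meas
  have hFmeas : ∀ j,
      AEStronglyMeasurable (fun w => R (αj j • w) ((αj j)⁻¹ • Tj j w)) μ₀ := by
    intro j
    have hmeq : (fun w => R (αj j • w) ((αj j)⁻¹ • Tj j w)) = fun w =>
        f (αj j • w + (αj j)⁻¹ • Tj j w) - f (αj j • w) -
          ⟪gradient f (αj j • w), (αj j)⁻¹ • Tj j w⟫ := by
      funext w
      rw [hR]
    rw [hmeq]
    have hm1 : Measurable fun w : E p => αj j • w := measurable_const_smul _
    have hm2 : Measurable fun w => αj j • w + (αj j)⁻¹ • Tj j w :=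
      hm1.add ((measurable_const_smul _).comp (hTjmeas j))
    have hm3 : Measurable fun w => ⟪gradient f (αj j • w), (αj j)⁻¹ • Tj j w⟫ :=
      (hgrad_meas.comp hm1).inner ((measurable_const_smul _).comp (hTjmeas j))
    exact (((hfcont.measurable.comp hm2).sub (hfcont.measurable.comp hm1)).sub
      hm3).aestronglyMeasurable
  -- integrability infrastructure
  have hI2 : Integrable (fun w : E p => ‖w‖ ^ 2) μ₀ := by
    refine ⟨(continuous_norm.pow 2).aestronglyMeasurable, ?_⟩
    have heq : ∀ w : E p, (‖(‖w‖ ^ 2)‖₊ : ℝ≥0∞) = (‖w‖₊ : ℝ≥0∞) ^ 2 := by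
      intro w
      rw [nnnorm_pow, nnnorm_norm]
      push_cast
      ring
    rw [MeasureTheory.hasFiniteIntegral_def]
    calc ∫⁻ w, (‖(‖w‖ ^ 2)‖₊ : ℝ≥0∞) ∂μ₀ = ∫⁻ w, (‖w‖₊ : ℝ≥0∞) ^ 2 ∂μ₀ :=
          lintegral_congr fun w => heq w
      _ < ⊤ := hμ₀.2
  have hw2 : MemLp (fun w : E p => ‖w‖) 2 μ₀ :=
    (memLp_two_iff_integrable_sq continuous_norm.aestronglyMeasurable).2 hI2
  have hIg2 : Integrable (fun w => g w ^ 2) μ₀ := hg.integrable_sq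
  have hTL2 : ∀ j, MemLp (Tj j) 2 μ₀ := by
    intro j
    refine MemLp.of_le (hg.const_mul (αj j)) (hTjmeas j).aestronglyMeasurable ?_
    filter_upwards [hdom j] with w hw
    have hα0 : 0 < αj j := hαjpos j
    have h1 : ‖Tj j w‖ ≤ αj j * g w := by
      rw [div_le_iff₀ hα0] at hw
      linarith
    calc ‖Tj j w‖ ≤ αj j * g w := h1
      _ ≤ ‖αj j * g w‖ := le_abs_self _
  have hTsq : ∀ j, Integrable (fun w => ‖Tj j w‖ ^ 2) μ₀ := fun j =>
    (hTL2 j).norm.integrable_sq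
  have hTnsq : ∀ j, Integrable (fun w => ‖(αj j)⁻¹ • Tj j w‖ ^ 2) μ₀ := fun j =>
    ((hTL2 j).const_smul ((αj j)⁻¹)).norm.integrable_sq
  -- the weight G₀
  set G₀ : E p → ℝ := fun w => L * (4 * ‖w‖ + |g w| + 2) with hG₀def
  have hG₀nn : ∀ w, 0 ≤ G₀ w := fun w =>
    mul_nonneg hL0 (by positivity)
  have hG₀aesm : AEStronglyMeasurable G₀ μ₀ := by
    have h1 : AEStronglyMeasurable (fun w : E p => |g w|) μ₀ := by
      have := hg.1.norm
      simpa [Real.norm_eq_abs] using this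
    exact aestronglyMeasurable_const.mul
      (((continuous_norm.aestronglyMeasurable.const_mul 4).add h1).add
        aestronglyMeasurable_const)
  have hG₀sq : Integrable (fun w => G₀ w ^ 2) μ₀ := by
    refine Integrable.mono' (g := fun w => 3 * L ^ 2 * (16 * ‖w‖ ^ 2 + g w ^ 2 + 4)) ?_ ?_ ?_
    · exact (((hI2.const_mul 16).add hIg2).add (integrable_const 4)).const_mul _
    · have : (fun w => G₀ w ^ 2) = fun w => G₀ w * G₀ w := by
        funext w; ring
      rw [this]
      exact hG₀aesm.mul hG₀aesm
    · refine Filter.Eventually.of_forall fun w => ?_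
      have hb : G₀ w = L * (4 * ‖w‖ + |g w| + 2) := rfl
      rw [Real.norm_eq_abs, abs_of_nonneg (sq_nonneg _), hb]
      have h1 : |g w| ^ 2 = g w ^ 2 := sq_abs _
      show (L * (4 * ‖w‖ + |g w| + 2)) ^ 2 ≤ 3 * L ^ 2 * (16 * ‖w‖ ^ 2 + g w ^ 2 + 4)
      nlinarith [norm_nonneg w, abs_nonneg (g w), sq_nonneg L,
        mul_nonneg (sq_nonneg L) (sq_nonneg (4 * ‖w‖ - |g w|)),
        mul_nonneg (sq_nonneg L) (sq_nonneg (4 * ‖w‖ - 2)),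
        mul_nonneg (sq_nonneg L) (sq_nonneg (|g w| - 2))]
  -- bad sets
  set bad : ℕ → Set (E p) := fun j => {w | EMetric.infEdist w Cxᶜ ≤ (‖hn j w‖₊ : ℝ≥0∞)}
    with hbaddef
  have hbad_meas : ∀ j, MeasurableSet (bad j) := by
    intro j
    apply measurableSet_le
    · exact (EMetric.continuous_infEdist (s := Cxᶜ)).measurable
    · exact (show Measurable (hn j) from (measurable_const_smul _).comp (hTjmeas j)).nnnorm.coe_nnreal_ennreal
  have hgood : ∀ j w, w ∉ bad j → ∀ t ∈ Set.Icc (0:ℝ) 1, w + t • hn j w ∈ Cx := by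
    intro j w hwb t ht
    by_contra hmem
    apply hwb
    have h1 : EMetric.infEdist w Cxᶜ ≤ edist w (w + t • hn j w) :=
      EMetric.infEdist_le_edist_of_mem hmem
    have h2 : edist w (w + t • hn j w) = (‖t • hn j w‖₊ : ℝ≥0∞) := by
      rw [edist_comm, edist_eq_enorm_sub, add_sub_cancel_left, enorm_eq_nnnorm]
    have h3 : ‖t • hn j w‖ ≤ ‖hn j w‖ := by
      rw [norm_smul, Real.norm_eq_abs, abs_of_nonneg ht.1]
      exact mul_le_of_le_one_left (norm_nonneg _) ht.2
    have h4 : (‖t • hn j w‖₊ : ℝ≥0∞) ≤ (‖hn j w‖₊ : ℝ≥0∞) := by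
      exact_mod_cast h3
    exact le_trans h1 (le_trans (le_of_eq h2) h4)
  -- a.e. facts
  have hCx_ae : ∀ᵐ w ∂μ₀, w ∈ Cx := by
    rw [MeasureTheory.ae_iff]
    exact hac hnull
  have hgnn : ∀ᵐ w ∂μ₀, 0 ≤ g w := by
    filter_upwards [hdom 0] with w hw
    have h0 : 0 < αj 0 := hαjpos 0
    exact le_trans (by positivity) hw
  have hhn_to : ∀ᵐ w ∂μ₀, Filter.Tendsto (fun j => hn j w) Filter.atTop (nhds 0) := by
    filter_upwards [hTjae] with w hw
    have h1 : Filter.Tendsto (fun j => (αj j)⁻¹) Filter.atTop (nhds 0) :=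
      hαj.inv_tendsto_atTop
    have h2 := h1.smul hw
    rw [zero_smul] at h2
    apply h2.congr
    intro j
    rw [hhn]
    simp only [smul_smul, pow_two, mul_inv]
  -- the pointwise dominating sequence
  set q : ℕ → E p → ℝ := fun j w => M * ‖(αj j)⁻¹ • Tj j w‖ ^ 2 +
      Set.indicator (bad j) (fun w' => G₀ w' * ‖Tj j w'‖) w with hqdef
  have hq_bound : ∀ j, 1 ≤ αj j →
      ∀ᵐ w ∂μ₀, |R (αj j • w) ((αj j)⁻¹ • Tj j w)| ≤ q j w := by
    intro j hα1
    filter_upwards [hCx_ae, hdom j, hgnn] with w hw hdw hgw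
    have hα0 : 0 < αj j := hαjpos j
    rw [key j w hw]
    have hTle : ‖Tj j w‖ ≤ αj j * g w := by
      rw [div_le_iff₀ hα0] at hdw
      linarith
    have hhn_norm : ‖hn j w‖ = ((αj j) ^ 2)⁻¹ * ‖Tj j w‖ := by
      rw [hhn]
      simp only [norm_smul, norm_inv, norm_pow, Real.norm_eq_abs, abs_of_pos hα0]
    have hhng : ‖hn j w‖ ≤ g w := by
      rw [hhn_norm, inv_mul_le_iff₀ (by positivity)]
      nlinarith [hTle, hα1, hgw, mul_nonneg (mul_nonneg hα0.le (sub_nonneg.2 hα1)) hgw]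
    have hABS : |(αj j) ^ 2 * r0 w (hn j w)| = (αj j) ^ 2 * |r0 w (hn j w)| := by
      rw [abs_mul, abs_of_pos (by positivity : (0:ℝ) < (αj j) ^ 2)]
    by_cases hcase : w ∈ bad j
    · -- fallback Lipschitz bound
      have h1 : |f (w + hn j w) - f w| ≤ L * (‖w + hn j w‖ + ‖w‖) * ‖hn j w‖ := by
        have := hLipQ (w + hn j w) w
        simpa [add_sub_cancel_left] using this
      have h2 : |fderiv ℝ f w (hn j w)| ≤ L * (2 * ‖w‖ + 2) * ‖hn j w‖ := by
        calc |fderiv ℝ f w (hn j w)| ≤ ‖fderiv ℝ f w‖ * ‖hn j w‖ :=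
              (fderiv ℝ f w).le_opNorm _
          _ ≤ L * (2 * ‖w‖ + 2) * ‖hn j w‖ :=
              mul_le_mul_of_nonneg_right (hDb w) (norm_nonneg _)
      have hwh : ‖w + hn j w‖ ≤ ‖w‖ + g w := by
        have hna := norm_add_le w (hn j w)
        linarith
      have h3 : |r0 w (hn j w)| ≤ G₀ w * ‖hn j w‖ := by
        have h4 : |r0 w (hn j w)| ≤ |f (w + hn j w) - f w| + |fderiv ℝ f w (hn j w)| := by
          rw [hr0]
          exact abs_sub _ _
        have hnn : 0 ≤ ‖hn j w‖ := norm_nonneg _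
        have hx : L * (‖w + hn j w‖ + ‖w‖) * ‖hn j w‖ + L * (2 * ‖w‖ + 2) * ‖hn j w‖
            = L * (‖w + hn j w‖ + ‖w‖ + (2 * ‖w‖ + 2)) * ‖hn j w‖ := by ring
        have hy : L * (‖w + hn j w‖ + ‖w‖ + (2 * ‖w‖ + 2)) * ‖hn j w‖
            ≤ L * (4 * ‖w‖ + |g w| + 2) * ‖hn j w‖ := by
          apply mul_le_mul_of_nonneg_right _ hnn
          apply mul_le_mul_of_nonneg_left _ hL0
          rw [abs_of_nonneg hgw]
          linarith
        have hb : G₀ w = L * (4 * ‖w‖ + |g w| + 2) := rfl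
        rw [hb]
        linarith
      have h6 : (αj j) ^ 2 * |r0 w (hn j w)| ≤ G₀ w * ‖Tj j w‖ := by
        have := mul_le_mul_of_nonneg_left h3 (le_of_lt (by positivity : (0:ℝ) < (αj j) ^ 2))
        calc (αj j) ^ 2 * |r0 w (hn j w)| ≤ (αj j) ^ 2 * (G₀ w * ‖hn j w‖) := this
          _ = G₀ w * ((αj j) ^ 2 * ‖hn j w‖) := by ring
          _ = G₀ w * ‖Tj j w‖ := by
              rw [hhn_norm]
              congr 1
              exact my_sc3 _ _ hα0
      rw [hABS]
      show _ ≤ M * ‖(αj j)⁻¹ • Tj j w‖ ^ 2 +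
        Set.indicator (bad j) (fun w' => G₀ w' * ‖Tj j w'‖) w
      have h7 : Set.indicator (bad j) (fun w' => G₀ w' * ‖Tj j w'‖) w
          = G₀ w * ‖Tj j w‖ := Set.indicator_of_mem hcase _
      rw [h7]
      have h8 : 0 ≤ M * ‖(αj j)⁻¹ • Tj j w‖ ^ 2 := by positivity
      linarith
    · -- good : Taylor bound
      have hseg := hgood j w hcase
      have htay := my_taylorBound f hdf hdf' M hM0 hMb w (hn j w) hseg
      have heqn : (αj j) ^ 2 * (M * ‖hn j w‖ ^ 2) = M * ‖(αj j)⁻¹ • Tj j w‖ ^ 2 := by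
        rw [hhn_norm, norm_smul, norm_inv, Real.norm_eq_abs, abs_of_pos hα0]
        exact my_sc2 _ _ _ hα0
      rw [hABS]
      show _ ≤ M * ‖(αj j)⁻¹ • Tj j w‖ ^ 2 +
        Set.indicator (bad j) (fun w' => G₀ w' * ‖Tj j w'‖) w
      have h7 : Set.indicator (bad j) (fun w' => G₀ w' * ‖Tj j w'‖) w = 0 :=
        Set.indicator_of_notMem hcase _
      rw [h7, add_zero, ← heqn]
      have := mul_le_mul_of_nonneg_left htay
        (le_of_lt (by positivity : (0:ℝ) < (αj j) ^ 2))
      calc (αj j) ^ 2 * |r0 w (hn j w)|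
          ≤ (αj j) ^ 2 * (M * ‖hn j w‖ ^ 2) := by
            apply mul_le_mul_of_nonneg_left _ (by positivity)
            exact htay
        _ = (αj j) ^ 2 * (M * ‖hn j w‖ ^ 2) := rfl
  -- integrability of the dominating sequence
  have hIP : ∀ j, Integrable
      (fun w => Set.indicator (bad j) (fun w' => G₀ w' * ‖Tj j w'‖) w) μ₀ := by
    intro j
    rw [show (fun w => Set.indicator (bad j) (fun w' => G₀ w' * ‖Tj j w'‖) w)
        = Set.indicator (bad j) (fun w' => G₀ w' * ‖Tj j w'‖) from rfl]
    apply Integrable.indicator _ (hbad_meas j)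
    refine Integrable.mono' (g := fun w => (1/2) * (G₀ w ^ 2 + ‖Tj j w‖ ^ 2)) ?_ ?_ ?_
    · exact (hG₀sq.add (hTsq j)).const_mul _
    · exact hG₀aesm.mul (hTjmeas j).norm.aestronglyMeasurable
    · refine Filter.Eventually.of_forall fun w => ?_
      rw [Real.norm_eq_abs, abs_of_nonneg (mul_nonneg (hG₀nn w) (norm_nonneg _))]
      nlinarith [sq_nonneg (G₀ w - ‖Tj j w‖)]
  have hq_int : ∀ j, Integrable (q j) μ₀ := by
    intro j
    rw [hqdef]
    exact ((hTnsq j).const_mul M).add (hIP j)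
  -- first half of the bound tends to zero
  have hqb1 : Filter.Tendsto (fun j => ∫ w, M * ‖(αj j)⁻¹ • Tj j w‖ ^ 2 ∂μ₀)
      Filter.atTop (nhds 0) := by
    have h0 : (0:ℝ) = ∫ _w, (0:ℝ) ∂μ₀ := by simp
    rw [h0]
    apply MeasureTheory.tendsto_integral_of_dominated_convergence
      (bound := fun w => M * g w ^ 2)
    · intro n
      exact ((((measurable_const_smul _).comp (hTjmeas n)).norm.pow_const 2).const_mul M).aestronglyMeasurable
    · exact hIg2.const_mul M
    · intro n
      filter_upwards [hdom n, hgnn] with w h1 h2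
      have hα0 : 0 < αj n := hαjpos n
      have h3 : ‖(αj n)⁻¹ • Tj n w‖ ≤ g w := by
        rw [norm_smul, norm_inv, Real.norm_eq_abs, abs_of_pos hα0, inv_mul_eq_div]
        exact h1
      rw [Real.norm_eq_abs, abs_of_nonneg (by positivity)]
      have := pow_le_pow_left₀ (norm_nonneg _) h3 2
      nlinarith
    · filter_upwards [hTjae] with w hw
      have h1 := (hw.norm.pow 2).const_mul M
      simpa using h1
  -- D_j tends to zero
  have hD : Filter.Tendsto
      (fun j => ∫ w, Set.indicator (bad j) (fun w' => G₀ w' ^ 2) w ∂μ₀)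
      Filter.atTop (nhds 0) := by
    have h0 : (0:ℝ) = ∫ _w, (0:ℝ) ∂μ₀ := by simp
    rw [h0]
    apply MeasureTheory.tendsto_integral_of_dominated_convergence
      (bound := fun w => G₀ w ^ 2)
    · intro n
      exact (hG₀sq.aestronglyMeasurable).indicator (hbad_meas n)
    · exact hG₀sq
    · intro n
      refine Filter.Eventually.of_forall fun w => ?_
      rw [Real.norm_eq_abs]
      by_cases hmem : w ∈ bad n
      · rw [Set.indicator_of_mem hmem, abs_of_nonneg (sq_nonneg _)]
      · rw [Set.indicator_of_notMem hmem]
        simp [sq_nonneg]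
    · filter_upwards [hCx_ae, hhn_to] with w hw hto
      have hpos : 0 < EMetric.infEdist w Cxᶜ := by
        refine EMetric.infEdist_pos_iff_notMem_closure.2 ?_
        rw [hopen.isClosed_compl.closure_eq]
        simpa using hw
      have hto' : Filter.Tendsto (fun j => (‖hn j w‖₊ : ℝ≥0∞)) Filter.atTop (nhds 0) := by
        rw [← ENNReal.coe_zero]
        apply ENNReal.tendsto_coe.2
        simpa using hto.nnnorm
      have hev := hto'.eventually_lt_const hpos
      apply Filter.Tendsto.congr' _ tendsto_const_nhds
      filter_upwards [hev] with j hj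
      have hnotmem : w ∉ bad j := by
        intro hmem
        exact absurd hmem (not_le.2 hj)
      exact (Set.indicator_of_notMem hnotmem _).symm
  -- second half of the bound tends to zero
  obtain ⟨B, hB⟩ := hTjbdd
  have hB0 : 0 ≤ B := le_trans (integral_nonneg fun w => by positivity) (hB 0)
  set Dj : ℕ → ℝ := fun j => ∫ w, Set.indicator (bad j) (fun w' => G₀ w' ^ 2) w ∂μ₀
    with hDjdef
  set b2 : ℕ → ℝ := fun j =>
    ∫ w, Set.indicator (bad j) (fun w' => G₀ w' * ‖Tj j w'‖) w ∂μ₀ with hb2def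
  have hDnn : ∀ j, 0 ≤ Dj j := fun j =>
    integral_nonneg fun w => Set.indicator_nonneg (fun w' _ => sq_nonneg _) w
  have hb2nn : ∀ j, 0 ≤ b2 j := fun j =>
    integral_nonneg fun w =>
      Set.indicator_nonneg (fun w' _ => mul_nonneg (hG₀nn w') (norm_nonneg _)) w
  have hb2_le : ∀ δ : ℝ, 0 < δ → ∀ j, b2 j ≤ δ / 2 * B + (2 * δ)⁻¹ * Dj j := by
    intro δ hδ j
    have hint2 : Integrable (fun w => δ / 2 * ‖Tj j w‖ ^ 2
        + (2 * δ)⁻¹ * Set.indicator (bad j) (fun w' => G₀ w' ^ 2) w) μ₀ := by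
      apply Integrable.add
      · exact (hTsq j).const_mul _
      · exact (hG₀sq.indicator (hbad_meas j)).const_mul _
    have hmono : b2 j ≤ ∫ w, (δ / 2 * ‖Tj j w‖ ^ 2
        + (2 * δ)⁻¹ * Set.indicator (bad j) (fun w' => G₀ w' ^ 2) w) ∂μ₀ := by
      apply integral_mono (hIP j) hint2
      intro w
      show Set.indicator (bad j) (fun w' => G₀ w' * ‖Tj j w'‖) w ≤ δ / 2 * ‖Tj j w‖ ^ 2
        + (2 * δ)⁻¹ * Set.indicator (bad j) (fun w' => G₀ w' ^ 2) w
      by_cases hmem : w ∈ bad j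
      · rw [Set.indicator_of_mem hmem, Set.indicator_of_mem hmem]
        exact my_amgm δ _ _ hδ
      · rw [Set.indicator_of_notMem hmem, Set.indicator_of_notMem hmem]
        positivity
    calc b2 j ≤ ∫ w, (δ / 2 * ‖Tj j w‖ ^ 2
        + (2 * δ)⁻¹ * Set.indicator (bad j) (fun w' => G₀ w' ^ 2) w) ∂μ₀ := hmono
      _ = δ / 2 * ∫ w, ‖Tj j w‖ ^ 2 ∂μ₀ + (2 * δ)⁻¹ * Dj j := by
          rw [integral_add ((hTsq j).const_mul _) ((hG₀sq.indicator (hbad_meas j)).const_mul _),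
            integral_const_mul, integral_const_mul]
      _ ≤ δ / 2 * B + (2 * δ)⁻¹ * Dj j := by
          have := hB j
          have h1 : δ / 2 * (∫ w, ‖Tj j w‖ ^ 2 ∂μ₀) ≤ δ / 2 * B :=
            mul_le_mul_of_nonneg_left this (by positivity)
          linarith
  have hb2 : Filter.Tendsto b2 Filter.atTop (nhds 0) := by
    rw [Metric.tendsto_atTop]
    intro ε hε
    have hB1 : (0:ℝ) < B + 1 := by linarith
    set δ : ℝ := ε / (2 * (B + 1)) with hδdef
    have hδ : 0 < δ := by positivity
    have hev := hD.eventually_lt_const (show (0:ℝ) < δ * ε / 2 by positivity)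
    obtain ⟨N, hN⟩ := Filter.eventually_atTop.1 hev
    refine ⟨N, fun j hj => ?_⟩
    rw [Real.dist_0_eq_abs, abs_of_nonneg (hb2nn j)]
    have h1 : δ / 2 * B ≤ ε / 4 := by
      rw [hδdef]
      rw [div_div, div_mul_eq_mul_div, div_le_div_iff₀ (by positivity) (by norm_num)]
      nlinarith
    have h2 : (2 * δ)⁻¹ * Dj j < ε / 4 := by
      have hDj := hN j hj
      have h3 : (2 * δ)⁻¹ * Dj j < (2 * δ)⁻¹ * (δ * ε / 2) := by
        apply mul_lt_mul_of_pos_left hDj (by positivity)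
      have h4 : (2 * δ)⁻¹ * (δ * ε / 2) = ε / 4 := by
        field_simp
        ring
      linarith
    calc b2 j ≤ δ / 2 * B + (2 * δ)⁻¹ * Dj j := hb2_le δ hδ j
      _ < ε / 4 + ε / 4 := by linarith
      _ < ε := by linarith
  -- assemble
  apply squeeze_zero_norm' (a := fun j => ∫ w, q j w ∂μ₀)
  · filter_upwards [hαj.eventually_ge_atTop 1] with j hj
    calc ‖∫ w, R (αj j • w) ((αj j)⁻¹ • Tj j w) ∂μ₀‖
        ≤ ∫ w, ‖R (αj j • w) ((αj j)⁻¹ • Tj j w)‖ ∂μ₀ :=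
          norm_integral_le_integral_norm _
      _ ≤ ∫ w, q j w ∂μ₀ := by
          apply integral_mono_of_nonneg (Filter.Eventually.of_forall fun w => norm_nonneg _)
            (hq_int j)
          filter_upwards [hq_bound j hj] with w hw
          rw [Real.norm_eq_abs]
          exact hw
  · have hsplit : (fun j => ∫ w, q j w ∂μ₀)
        = fun j => (∫ w, M * ‖(αj j)⁻¹ • Tj j w‖ ^ 2 ∂μ₀) + b2 j := by
      funext j
      rw [hqdef, hb2def]
      exact integral_add ((hTnsq j).const_mul M) (hIP j)
    rw [hsplit]
    have := hqb1.add hb2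
    simpa using this
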